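/- Let ℓ(s) = 1 + |log s| and ℓℓ(s) = 1 + log ℓ(s). For q ∈ [1,∞], α < 1/q', β ∈ ℝ, one has ‖s^{-1/q'} ℓ(s)^{-α} ℓℓ(s)^{-β}‖_{L^{q'}(r, 1-r)} ≈ ℓ(r)^{1/q' - α} ℓℓ(r)^{-β} near 0, with constants independent of r. -/

import Mathlib

open MeasureTheory Set Real Filter
open scoped ENNReal

noncomputable def ell (s : ℝ) : ℝ := 1 + |Real.log s|
noncomputable def ellell (s : ℝ) : ℝ := 1 + Real.log (ell s)

lemma one_le_ell (s : ℝ) : 1 ≤ ell s := by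
  simp [ell, abs_nonneg]

lemma ell_pos (s : ℝ) : 0 < ell s := lt_of_lt_of_le one_pos (one_le_ell s)

lemma one_le_ellell (s : ℝ) : 1 ≤ ellell s := by
  have := Real.log_nonneg (one_le_ell s)
  simp only [ellell]; linarith

lemma ellell_pos (s : ℝ) : 0 < ellell s := lt_of_lt_of_le one_pos (one_le_ellell s)

lemma ell_eq {s : ℝ} (h0 : 0 < s) (h1 : s ≤ 1) : ell s = 1 - Real.log s := by
  have : Real.log s ≤ 0 := Real.log_nonpos h0.le h1
  simp [ell, abs_of_nonpos this]; ring

lemma ellell_eq {s : ℝ} (h0 : 0 < s) (h1 : s ≤ 1) :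
    ellell s = 1 + Real.log (1 - Real.log s) := by
  rw [ellell, ell_eq h0 h1]

lemma ell_anti {s t : ℝ} (h0 : 0 < s) (hst : s ≤ t) (h1 : t ≤ 1) : ell t ≤ ell s := by
  rw [ell_eq h0 (hst.trans h1), ell_eq (h0.trans_le hst) h1]
  have := Real.log_le_log h0 hst
  linarith

lemma ellell_anti {s t : ℝ} (h0 : 0 < s) (hst : s ≤ t) (h1 : t ≤ 1) : ellell t ≤ ellell s := by
  have := Real.log_le_log (ell_pos t) (ell_anti h0 hst h1)
  simp only [ellell]; linarith

/-- band lemma: if y/2 ≤ x ≤ y then x^t ≥ 2^{-|t|} y^t -/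
lemma band {x y t : ℝ} (hx : 0 < x) (h1 : y ≤ 2*x) (h2 : x ≤ y) :
    (2:ℝ)^(-|t|) * y^t ≤ x^t := by
  have hy : 0 < y := hx.trans_le h2
  rcases le_or_gt 0 t with ht | ht
  · rw [abs_of_nonneg ht]
    have : (y/2) ^ t ≤ x ^ t := Real.rpow_le_rpow (by positivity) (by linarith) ht
    calc (2:ℝ)^(-t) * y^t = (y/2)^t := by
          rw [div_rpow hy.le (by norm_num), Real.rpow_neg (by norm_num)]
          ring
      _ ≤ x ^ t := this
  · rw [abs_of_neg ht]
    have h3 : y ^ t ≤ x ^ t := Real.rpow_le_rpow_of_nonpos hx h2 ht.le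
    have h4 : (2:ℝ)^(-(-t)) ≤ 1 := Real.rpow_le_one_of_one_le_of_nonpos (by norm_num) (by linarith)
    nlinarith [Real.rpow_pos_of_pos hy t, Real.rpow_pos_of_pos (by norm_num : (0:ℝ)<2) (-(-t))]

/-- comparison of `ell, ellell` at `r` and `√r` -/
lemma sqrt_band {r : ℝ} (h0 : 0 < r) (hr : r ≤ 1) :
    ell r ≤ 2 * ell (Real.sqrt r) ∧ ell (Real.sqrt r) ≤ ell r ∧
    ellell r ≤ 2 * ellell (Real.sqrt r) ∧ ellell (Real.sqrt r) ≤ ellell r := by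
  have hs0 : 0 < Real.sqrt r := Real.sqrt_pos.2 h0
  have hs1 : Real.sqrt r ≤ 1 := by
    rw [show (1:ℝ) = Real.sqrt 1 by simp]
    exact Real.sqrt_le_sqrt hr
  have hrs : r ≤ Real.sqrt r := by
    nlinarith [Real.sq_sqrt h0.le, Real.sqrt_nonneg r]
  have hlog : Real.log (Real.sqrt r) = Real.log r / 2 := Real.log_sqrt h0.le
  have hlr : Real.log r ≤ 0 := Real.log_nonpos h0.le hr
  constructor
  · rw [ell_eq h0 hr, ell_eq hs0 hs1, hlog]; linarith
  refine ⟨ell_anti h0 hrs hs1, ?_, ellell_anti h0 hrs hs1⟩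
  -- ellell r ≤ 2 * ellell (√r)
  have h1 : ell r ≤ 2 * ell (Real.sqrt r) := by
    rw [ell_eq h0 hr, ell_eq hs0 hs1, hlog]; linarith
  have h2 : Real.log (ell r) ≤ Real.log 2 + Real.log (ell (Real.sqrt r)) := by
    rw [← Real.log_mul (by norm_num) (ell_pos _).ne']
    exact Real.log_le_log (ell_pos r) h1
  have h3 : Real.log 2 ≤ 1 := by
    have := Real.log_le_sub_one_of_pos (by norm_num : (0:ℝ) < 2)
    linarith
  have h4 : 0 ≤ Real.log (ell (Real.sqrt r)) := Real.log_nonneg (one_le_ell _)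
  simp only [ellell]; linarith

noncomputable def Hf (γ b s : ℝ) : ℝ :=
  (1 - Real.log s)^γ * (1 + Real.log (1 - Real.log s))^(-b)

noncomputable def Df (γ b s : ℝ) : ℝ :=
  s⁻¹ * (1 - Real.log s)^(γ-1) * (1 + Real.log (1 - Real.log s))^(-b-1)
    * (γ*(1 + Real.log (1 - Real.log s)) - b)

lemma Hf_eq {γ b s : ℝ} (h0 : 0 < s) (h1 : s ≤ 1) :
    Hf γ b s = ell s ^ γ * ellell s ^ (-b) := by
  rw [Hf, ← ell_eq h0 h1, ellell]

lemma Hf_nonneg (γ b : ℝ) {s : ℝ} (h0 : 0 < s) (h1 : s ≤ 1) : 0 ≤ Hf γ b s := by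
  rw [Hf_eq h0 h1]
  have := ell_pos s
  have := ellell_pos s
  positivity

lemma hasDerivAt_Hf (γ b : ℝ) {s : ℝ} (h0 : 0 < s) (h1 : s < 1) :
    HasDerivAt (Hf γ b) (-(Df γ b s)) s := by
  have hls : Real.log s < 0 := Real.log_neg h0 h1
  set L := 1 - Real.log s with hLdef
  have hL : 0 < L := by simp only [hLdef]; linarith
  have hM : 0 < 1 + Real.log L := by
    have : 0 ≤ Real.log L := Real.log_nonneg (by simp only [hLdef]; linarith)
    linarith
  have h1' : HasDerivAt (fun s : ℝ => 1 - Real.log s) (-s⁻¹) s :=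
    (Real.hasDerivAt_log h0.ne').const_sub 1
  have h2 : HasDerivAt (fun s : ℝ => (1 - Real.log s)^γ) ((-s⁻¹) * γ * L^(γ-1)) s :=
    h1'.rpow_const (Or.inl hL.ne')
  have h3 : HasDerivAt (fun s : ℝ => 1 + Real.log (1 - Real.log s)) ((-s⁻¹)/L) s :=
    (h1'.log hL.ne').const_add 1
  have h4 : HasDerivAt (fun s : ℝ => (1 + Real.log (1 - Real.log s))^(-b))
      (((-s⁻¹)/L) * (-b) * (1 + Real.log L)^(-b-1)) s :=
    h3.rpow_const (Or.inl hM.ne')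
  have h5 := h2.mul h4
  refine h5.congr_deriv (Eq.symm ?_)
  have e1 : L^(γ-1) = L^γ / L := Real.rpow_sub_one hL.ne' γ
  have e2 : (1 + Real.log L)^(-b-1) = (1 + Real.log L)^(-b) / (1 + Real.log L) := by
    have := Real.rpow_sub_one hM.ne' (-b)
    rw [← this]
  simp only [Df, Hf, ← hLdef, e1, e2]
  field_simp
  ring

lemma Df_nonneg {γ b s : ℝ} (hγ : 0 < γ) (h0 : 0 < s) (h1 : s < 1)
    (hth : 2*(|b|+1) ≤ γ * ellell s) : 0 ≤ Df γ b s := by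
  have hM : 0 < 1 + Real.log (1 - Real.log s) := by
    rw [← ellell_eq h0 h1.le]; exact ellell_pos s
  have hL : 0 < 1 - Real.log s := by
    rw [← ell_eq h0 h1.le]; exact ell_pos s
  have hlast : 0 ≤ γ*(1 + Real.log (1 - Real.log s)) - b := by
    have := ellell_eq h0 h1.le
    nlinarith [le_abs_self b, abs_nonneg b]
  have hr1 := Real.rpow_pos_of_pos hL (γ-1)
  have hr2 := Real.rpow_pos_of_pos hM (-b-1)
  unfold Df
  exact mul_nonneg (mul_nonneg (mul_nonneg (inv_nonneg.2 h0.le) hr1.le) hr2.le) hlast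

lemma g_le_Df {γ b s : ℝ} (hγ : 0 < γ) (h0 : 0 < s) (h1 : s < 1)
    (hth : 2*(|b|+1) ≤ γ * ellell s) :
    γ * (s⁻¹ * ell s^(γ-1) * ellell s^(-b)) ≤ 2 * Df γ b s := by
  have hle := ellell_eq h0 h1.le
  have hL : 0 < 1 - Real.log s := by rw [← ell_eq h0 h1.le]; exact ell_pos s
  have hM : 0 < 1 + Real.log (1 - Real.log s) := by rw [← hle]; exact ellell_pos s
  rw [ell_eq h0 h1.le, hle, Df]
  have e2 : (1 + Real.log (1 - Real.log s))^(-b)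
      = (1 + Real.log (1 - Real.log s))^(-b-1) * (1 + Real.log (1 - Real.log s)) := by
    rw [Real.rpow_sub_one hM.ne' (-b)]
    field_simp
  rw [e2]
  have hb : 2 * b ≤ γ * (1 + Real.log (1 - Real.log s)) := by
    rw [← hle]
    nlinarith [le_abs_self b, abs_nonneg b]
  have hr1 := Real.rpow_pos_of_pos hL (γ-1)
  have hr2 := Real.rpow_pos_of_pos hM (-b-1)
  have hpos : 0 ≤ s⁻¹ * (1 - Real.log s)^(γ-1) * (1 + Real.log (1 - Real.log s))^(-b-1) := by
    have := inv_pos.2 h0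
    positivity
  nlinarith [mul_le_mul_of_nonneg_left hb hpos]

lemma phi_tendsto (γ b : ℝ) (hγ : 0 < γ) :
    Tendsto (fun u : ℝ => u^γ * (1+Real.log u)^(-b)) atTop atTop := by
  have hlt : Tendsto (fun u:ℝ => 1 + Real.log u) atTop atTop :=
    tendsto_atTop_add_const_left _ 1 Real.tendsto_log_atTop
  have ho : (fun u:ℝ => Real.log (1+Real.log u)) =o[atTop] (fun u:ℝ => 1 + Real.log u) :=
    Real.isLittleO_log_id_atTop.comp_tendsto hlt
  set ε : ℝ := γ/(4*(|b|+1)) with hε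
  have hεpos : 0 < ε := by positivity
  have hev1 := ho.bound hεpos
  have hev2 : ∀ᶠ u : ℝ in atTop, 1 ≤ Real.log u := Real.tendsto_log_atTop.eventually_ge_atTop 1
  have key : ∀ᶠ u : ℝ in atTop, u^(γ/2) ≤ u^γ * (1+Real.log u)^(-b) := by
    filter_upwards [hev1, hev2, eventually_ge_atTop (1:ℝ)] with u h1 h2 h3
    have hu : (0:ℝ) < u := lt_of_lt_of_le one_pos h3
    have hlu : (0:ℝ) < 1 + Real.log u := by linarith
    have hb1 : |Real.log (1+Real.log u)| ≤ ε * |1+Real.log u| := by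
      simpa [Real.norm_eq_abs] using h1
    have hb2 : Real.log (1+Real.log u) ≤ ε * (1 + Real.log u) := by
      calc Real.log (1+Real.log u) ≤ |Real.log (1+Real.log u)| := le_abs_self _
        _ ≤ ε * |1+Real.log u| := hb1
        _ = ε * (1 + Real.log u) := by rw [abs_of_pos hlu]
    have hlogpos : 0 ≤ Real.log (1+Real.log u) := Real.log_nonneg (by linarith)
    -- b * log(1+log u) ≤ (γ/2) * log u
    have hkey : b * Real.log (1+Real.log u) ≤ (γ/2) * Real.log u := by
      have h4 : b * Real.log (1+Real.log u) ≤ |b| * Real.log (1+Real.log u) := by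
        nlinarith [le_abs_self b]
      have h5 : |b| * Real.log (1+Real.log u) ≤ |b| * (ε * (1 + Real.log u)) := by
        nlinarith [abs_nonneg b]
      have h6 : 1 + Real.log u ≤ 2 * Real.log u := by linarith
      have h7 : |b| * ε ≤ γ/4 := by
        rw [hε, ← mul_div_assoc, div_le_div_iff₀ (by positivity) (by norm_num : (0:ℝ) < 4)]
        nlinarith [abs_nonneg b]
      nlinarith [abs_nonneg b, hεpos.le]
    have e1 : (1+Real.log u)^(-b) = Real.exp (-b * Real.log (1+Real.log u)) := by
      rw [Real.rpow_def_of_pos hlu]; ring_nf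
    have e2 : u^(-(γ/2)) = Real.exp (-(γ/2) * Real.log u) := by
      rw [Real.rpow_def_of_pos hu]; ring_nf
    have h8 : u^(-(γ/2)) ≤ (1+Real.log u)^(-b) := by
      rw [e1, e2]
      exact Real.exp_le_exp.2 (by nlinarith)
    calc u^(γ/2) = u^γ * u^(-(γ/2)) := by
          rw [← Real.rpow_add hu]; ring_nf
      _ ≤ u^γ * (1+Real.log u)^(-b) :=
          mul_le_mul_of_nonneg_left h8 (Real.rpow_pos_of_pos hu γ).le
  exact tendsto_atTop_mono' _ key (tendsto_rpow_atTop (by linarith))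

lemma threshold (γ b : ℝ) (hγ : 0 < γ) :
    ∃ s₁ : ℝ, 0 < s₁ ∧ s₁ ≤ 1/4 ∧ ∀ s, 0 < s → s ≤ s₁ → 2*(|b|+1) ≤ γ * ellell s := by
  set T : ℝ := 2*(|b|+1)/γ with hT
  have hTpos : 0 < T := by positivity
  set s₁ : ℝ := min (1/4) (Real.exp (-(Real.exp T))) with hs₁
  have hs₁pos : 0 < s₁ := lt_min (by norm_num) (Real.exp_pos _)
  refine ⟨s₁, hs₁pos, min_le_left _ _, ?_⟩
  intro s hs hss
  have h1 : s ≤ Real.exp (-(Real.exp T)) := hss.trans (min_le_right _ _)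
  have h2 : Real.log s ≤ -(Real.exp T) := by
    have := Real.log_le_log hs h1
    rwa [Real.log_exp] at this
  have h3 : Real.exp T ≤ |Real.log s| := by
    rw [abs_of_nonpos (by linarith [Real.exp_pos T])]
    linarith
  have h4 : Real.exp T ≤ ell s := by
    have : 0 ≤ |Real.log s| := abs_nonneg _
    simp only [ell]; linarith
  have h5 : T ≤ Real.log (ell s) := by
    calc T = Real.log (Real.exp T) := (Real.log_exp T).symm
      _ ≤ Real.log (ell s) := Real.log_le_log (Real.exp_pos T) h4
  have h6 : T ≤ ellell s := by simp only [ellell]; linarith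
  calc 2*(|b|+1) = γ * T := by rw [hT]; field_simp
    _ ≤ γ * ellell s := by nlinarith

lemma r0_exists (γ b M s₁ : ℝ) (hγ : 0 < γ) (hs₁pos : 0 < s₁) (hs₁le : s₁ ≤ 1/4) :
    ∃ r₀ : ℝ, 0 < r₀ ∧ r₀ ≤ s₁^2 ∧ r₀ ≤ 1/4 ∧
      ∀ r, 0 < r → r < r₀ → M ≤ ell r ^ γ * ellell r ^ (-b) := by
  obtain ⟨u₂, hu₂⟩ := (Filter.eventually_atTop).1 ((phi_tendsto γ b hγ).eventually_ge_atTop M)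
  set r₀ : ℝ := min (s₁^2) (Real.exp (1 - max u₂ 1)) with hr₀
  refine ⟨r₀, lt_min (by positivity) (Real.exp_pos _), min_le_left _ _,
    (min_le_left _ _).trans (by nlinarith), ?_⟩
  intro r hr hrr
  have h1 : r < Real.exp (1 - max u₂ 1) := lt_of_lt_of_le hrr (min_le_right _ _)
  have hr1 : r ≤ 1 := by
    have : r < s₁^2 := lt_of_lt_of_le hrr (min_le_left _ _)
    nlinarith
  have h2 : Real.log r < 1 - max u₂ 1 := by
    calc Real.log r < Real.log (Real.exp (1 - max u₂ 1)) := Real.log_lt_log hr h1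
      _ = 1 - max u₂ 1 := Real.log_exp _
  have h3 : u₂ ≤ ell r := by
    rw [ell_eq hr hr1]
    have := le_max_left u₂ 1
    linarith
  have := hu₂ (ell r) h3
  calc M ≤ ell r ^ γ * (1 + Real.log (ell r)) ^ (-b) := this
    _ = ell r ^ γ * ellell r ^ (-b) := by rw [ellell]

lemma contOn_ell : ContinuousOn ell {s : ℝ | s ≠ 0} := by
  have : ContinuousOn Real.log {s : ℝ | s ≠ 0} := by
    intro x hx
    exact (Real.continuousAt_log hx).continuousWithinAt
  exact (continuousOn_const.add this.abs)

lemma contOn_ellell : ContinuousOn ellell {s : ℝ | s ≠ 0} := by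
  exact continuousOn_const.add (contOn_ell.log (fun x hx => (ell_pos x).ne'))

lemma contOn_g (a b : ℝ) :
    ContinuousOn (fun s : ℝ => s⁻¹ * ell s^(-a) * ellell s^(-b)) (Ioi (0:ℝ)) := by
  have hsub : (Ioi (0:ℝ)) ⊆ {s : ℝ | s ≠ 0} := fun x hx => ne_of_gt hx
  have h1 : ContinuousOn (fun s : ℝ => s⁻¹) (Ioi (0:ℝ)) :=
    continuousOn_id.inv₀ (fun x hx => ne_of_gt hx)
  have h2 : ContinuousOn (fun s : ℝ => ell s^(-a)) (Ioi (0:ℝ)) :=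
    (contOn_ell.mono hsub).rpow_const (fun x _ => Or.inl (ell_pos x).ne')
  have h3 : ContinuousOn (fun s : ℝ => ellell s^(-b)) (Ioi (0:ℝ)) :=
    (contOn_ellell.mono hsub).rpow_const (fun x _ => Or.inl (ellell_pos x).ne')
  exact (h1.mul h2).mul h3

lemma contOn_Hfg (γ b : ℝ) :
    ContinuousOn (fun s : ℝ => ell s^γ * ellell s^(-b)) (Ioi (0:ℝ)) := by
  have hsub : (Ioi (0:ℝ)) ⊆ {s : ℝ | s ≠ 0} := fun x hx => ne_of_gt hx
  have h2 : ContinuousOn (fun s : ℝ => ell s^γ) (Ioi (0:ℝ)) :=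
    (contOn_ell.mono hsub).rpow_const (fun x _ => Or.inl (ell_pos x).ne')
  have h3 : ContinuousOn (fun s : ℝ => ellell s^(-b)) (Ioi (0:ℝ)) :=
    (contOn_ellell.mono hsub).rpow_const (fun x _ => Or.inl (ellell_pos x).ne')
  exact h2.mul h3

lemma contOn_Df (γ b : ℝ) : ContinuousOn (Df γ b) (Ioo (0:ℝ) 1) := by
  have hL : ∀ x ∈ Ioo (0:ℝ) 1, (0:ℝ) < 1 - Real.log x := by
    intro x hx
    have := Real.log_neg hx.1 hx.2
    linarith
  have hM : ∀ x ∈ Ioo (0:ℝ) 1, (0:ℝ) < 1 + Real.log (1 - Real.log x) := by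
    intro x hx
    have h := Real.log_nonneg (by linarith [Real.log_neg hx.1 hx.2] : (1:ℝ) ≤ 1 - Real.log x)
    linarith
  have h1 : ContinuousOn (fun s : ℝ => s⁻¹) (Ioo (0:ℝ) 1) :=
    continuousOn_id.inv₀ (fun x hx => ne_of_gt hx.1)
  have hLc : ContinuousOn (fun s : ℝ => 1 - Real.log s) (Ioo (0:ℝ) 1) :=
    continuousOn_const.sub (Real.continuousOn_log.mono (fun x hx => ne_of_gt hx.1))
  have hMc : ContinuousOn (fun s : ℝ => 1 + Real.log (1 - Real.log s)) (Ioo (0:ℝ) 1) :=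
    continuousOn_const.add (hLc.log (fun x hx => (hL x hx).ne'))
  have h2 : ContinuousOn (fun s : ℝ => (1 - Real.log s)^(γ-1)) (Ioo (0:ℝ) 1) :=
    hLc.rpow_const (fun x hx => Or.inl (hL x hx).ne')
  have h3 : ContinuousOn (fun s : ℝ => (1 + Real.log (1 - Real.log s))^(-b-1)) (Ioo (0:ℝ) 1) :=
    hMc.rpow_const (fun x hx => Or.inl (hM x hx).ne')
  exact ((h1.mul h2).mul h3).mul ((hMc.const_smul γ).sub continuousOn_const)

lemma Hf_anti (γ b : ℝ) (hγ : 0 < γ) {x y : ℝ} (hx : 0 < x) (hy : y < 1)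
    (hth : ∀ s, 0 < s → s ≤ y → 2*(|b|+1) ≤ γ * ellell s) :
    AntitoneOn (Hf γ b) (Icc x y) := by
  have hcont : ContinuousOn (Hf γ b) (Icc x y) := by
    intro s hs
    exact (hasDerivAt_Hf γ b (hx.trans_le hs.1)
      (lt_of_le_of_lt hs.2 hy)).continuousAt.continuousWithinAt
  have hder : ∀ s ∈ interior (Icc x y), HasDerivAt (Hf γ b) (-(Df γ b s)) s := by
    rw [interior_Icc]
    intro s hs
    exact hasDerivAt_Hf γ b (hx.trans hs.1) (hs.2.trans hy)
  apply antitoneOn_of_deriv_nonpos (convex_Icc x y) hcont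
    (fun s hs => (hder s hs).differentiableAt.differentiableWithinAt)
  intro s hs
  rw [(hder s hs).deriv]
  rw [interior_Icc] at hs
  have h0s : 0 < s := hx.trans hs.1
  have h1s : s < 1 := hs.2.trans hy
  have := Df_nonneg hγ h0s h1s (hth s h0s hs.2.le)
  linarith

lemma core_lower (a b : ℝ) :
    ∃ c : ℝ, 0 < c ∧ ∀ r : ℝ, 0 < r → r < 1/4 →
      ENNReal.ofReal (c * (ell r^(1-a) * ellell r^(-b))) ≤
        ∫⁻ s in Ioo r (1-r), ENNReal.ofReal (s⁻¹ * ell s^(-a) * ellell s^(-b)) := by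
  refine ⟨(2:ℝ)^(-|(-a)|) * (2:ℝ)^(-|(-b)|) / 4, by positivity, ?_⟩
  intro r hr hr4
  have hr1 : r < 1 := by linarith
  have hsq0 : 0 < Real.sqrt r := Real.sqrt_pos.2 hr
  have hsql : Real.sqrt r ≤ 1/2 := by
    rw [show (1/2:ℝ) = Real.sqrt (1/4) by
      rw [show (1/4:ℝ) = (1/2)^2 by norm_num, Real.sqrt_sq (by norm_num)]]
    exact Real.sqrt_le_sqrt hr4.le
  have hsq1 : Real.sqrt r ≤ 1 := by linarith
  have hrsq : r < Real.sqrt r := by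
    nlinarith [Real.sq_sqrt hr.le, hsq0, hsql]
  have hsub : Ioo r (Real.sqrt r) ⊆ Ioo r (1-r) :=
    Ioo_subset_Ioo (le_refl r) (by linarith)
  set A₀ : ℝ := (2:ℝ)^(-|(-a)|) * ell r^(-a) with hA₀
  set B₀ : ℝ := (2:ℝ)^(-|(-b)|) * ellell r^(-b) with hB₀
  have hA₀pos : 0 < A₀ := by
    have := ell_pos r
    positivity
  have hB₀pos : 0 < B₀ := by
    have := ellell_pos r
    positivity
  obtain ⟨hb1, hb2, hb3, hb4⟩ := sqrt_band hr hr1.le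
  -- pointwise bound on Ioo r √r
  have hpt : ∀ s ∈ Ioo r (Real.sqrt r),
      ENNReal.ofReal (A₀ * B₀ * s⁻¹) ≤ ENNReal.ofReal (s⁻¹ * ell s^(-a) * ellell s^(-b)) := by
    intro s hs
    have hs0 : 0 < s := hr.trans hs.1
    have hs1 : s ≤ 1 := hs.2.le.trans hsq1
    have hA : A₀ ≤ ell s^(-a) := by
      apply band (ell_pos s)
      · calc ell r ≤ 2 * ell (Real.sqrt r) := hb1
          _ ≤ 2 * ell s := by linarith [ell_anti hs0 hs.2.le hsq1]
      · exact ell_anti hr hs.1.le hs1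
    have hB : B₀ ≤ ellell s^(-b) := by
      apply band (ellell_pos s)
      · calc ellell r ≤ 2 * ellell (Real.sqrt r) := hb3
          _ ≤ 2 * ellell s := by linarith [ellell_anti hs0 hs.2.le hsq1]
      · exact ellell_anti hr hs.1.le hs1
    apply ENNReal.ofReal_le_ofReal
    calc A₀ * B₀ * s⁻¹ = s⁻¹ * A₀ * B₀ := by ring
      _ ≤ s⁻¹ * ell s^(-a) * B₀ :=
          mul_le_mul_of_nonneg_right
            (mul_le_mul_of_nonneg_left hA (inv_nonneg.2 hs0.le)) hB₀pos.le
      _ ≤ s⁻¹ * ell s^(-a) * ellell s^(-b) := by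
          apply mul_le_mul_of_nonneg_left hB
          have := Real.rpow_pos_of_pos (ell_pos s) (-a)
          positivity
  -- the integral of the lower function
  have hint : IntegrableOn (fun s : ℝ => A₀ * B₀ * s⁻¹) (Ioo r (Real.sqrt r)) volume := by
    apply IntegrableOn.mono_set ?_ Ioo_subset_Icc_self
    apply ContinuousOn.integrableOn_Icc
    exact continuousOn_const.mul (continuousOn_id.inv₀
      (fun x hx => ne_of_gt (hr.trans_le hx.1)))
  have hnn : 0 ≤ᵐ[volume.restrict (Ioo r (Real.sqrt r))] (fun s : ℝ => A₀ * B₀ * s⁻¹) := by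
    filter_upwards [ae_restrict_mem measurableSet_Ioo] with s hs
    have hs0 : 0 < s := hr.trans hs.1
    positivity
  have heq : ENNReal.ofReal (∫ s in Ioo r (Real.sqrt r), A₀ * B₀ * s⁻¹) =
      ∫⁻ s in Ioo r (Real.sqrt r), ENNReal.ofReal (A₀ * B₀ * s⁻¹) :=
    MeasureTheory.ofReal_integral_eq_lintegral_ofReal hint hnn
  have hval : ∫ s in Ioo r (Real.sqrt r), A₀ * B₀ * s⁻¹ = A₀ * B₀ * (-Real.log r / 2) := by
    rw [← MeasureTheory.integral_Ioc_eq_integral_Ioo,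
      ← intervalIntegral.integral_of_le hrsq.le,
      intervalIntegral.integral_const_mul, integral_inv_of_pos hr hsq0,
      Real.log_div hsq0.ne' hr.ne', Real.log_sqrt hr.le]
    ring
  -- real inequality
  have hlog1 : 1 ≤ -Real.log r := by
    have h4 : Real.log 4 ≤ -Real.log r := by
      rw [← Real.log_inv]
      apply Real.log_le_log (by norm_num)
      rw [le_inv_comm₀ (by norm_num) hr]
      linarith
    have : (1:ℝ) ≤ Real.log 4 := by
      rw [show (4:ℝ) = 2^(2:ℕ) by norm_num, Real.log_pow]
      have := Real.log_two_gt_d9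
      push_cast
      linarith
    linarith
  have hellr : ell r = 1 - Real.log r := ell_eq hr hr1.le
  have hreal : (2:ℝ)^(-|(-a)|) * (2:ℝ)^(-|(-b)|) / 4 * (ell r^(1-a) * ellell r^(-b)) ≤
      A₀ * B₀ * (-Real.log r / 2) := by
    have hsplit : ell r^(1-a) = ell r^(-a) * ell r := by
      rw [show (1-a:ℝ) = -a + 1 by ring, Real.rpow_add (ell_pos r), Real.rpow_one]
    have hquarter : ell r / 4 ≤ -Real.log r / 2 := by rw [hellr]; linarith
    calc (2:ℝ)^(-|(-a)|) * (2:ℝ)^(-|(-b)|) / 4 * (ell r^(1-a) * ellell r^(-b))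
        = A₀ * B₀ * (ell r / 4) := by rw [hsplit, hA₀, hB₀]; ring
      _ ≤ A₀ * B₀ * (-Real.log r / 2) := by
          apply mul_le_mul_of_nonneg_left hquarter (by positivity)
  calc ENNReal.ofReal ((2:ℝ)^(-|(-a)|) * (2:ℝ)^(-|(-b)|) / 4 * (ell r^(1-a) * ellell r^(-b)))
      ≤ ENNReal.ofReal (A₀ * B₀ * (-Real.log r / 2)) := ENNReal.ofReal_le_ofReal hreal
    _ = ∫⁻ s in Ioo r (Real.sqrt r), ENNReal.ofReal (A₀ * B₀ * s⁻¹) := by rw [← heq, hval]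
    _ ≤ ∫⁻ s in Ioo r (Real.sqrt r), ENNReal.ofReal (s⁻¹ * ell s^(-a) * ellell s^(-b)) :=
        setLIntegral_mono' measurableSet_Ioo hpt
    _ ≤ ∫⁻ s in Ioo r (1-r), ENNReal.ofReal (s⁻¹ * ell s^(-a) * ellell s^(-b)) :=
        lintegral_mono_set hsub

lemma core_upper (a b : ℝ) (ha : a < 1) :
    ∃ C r₀ : ℝ, 0 < C ∧ 0 < r₀ ∧ r₀ ≤ 1/4 ∧ ∀ r : ℝ, 0 < r → r < r₀ →
      ∫⁻ s in Ioo r (1-r), ENNReal.ofReal (s⁻¹ * ell s^(-a) * ellell s^(-b)) ≤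
        ENNReal.ofReal (C * (ell r^(1-a) * ellell r^(-b))) := by
  set γ := 1 - a with hγdef
  have hγ : 0 < γ := by rw [hγdef]; linarith
  obtain ⟨s₁, hs₁pos, hs₁le, hth⟩ := threshold γ b hγ
  obtain ⟨M, hM⟩ := (isCompact_Icc (a := s₁) (b := 1)).exists_bound_of_continuousOn
    ((contOn_g a b).mono (fun x hx => lt_of_lt_of_le hs₁pos hx.1))
  set M' := max M 1 with hM'def
  obtain ⟨r₀, hr₀pos, hr₀sq, hr₀le, hr₀M⟩ := r0_exists γ b M' s₁ hγ hs₁pos hs₁le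
  refine ⟨2/γ + 1, r₀, by positivity, hr₀pos, hr₀le, ?_⟩
  intro r hr hrr
  have hr4 : r < 1/4 := lt_of_lt_of_le hrr hr₀le
  have hrs₁ : r < s₁ := by
    have : r < s₁^2 := lt_of_lt_of_le hrr hr₀sq
    nlinarith
  have hs₁1r : s₁ ≤ 1 - r := by linarith
  have hs₁1 : s₁ < 1 := by linarith
  have hdisj : Disjoint (Ioo r s₁) (Ico s₁ (1-r)) := by
    rw [Set.disjoint_left]
    rintro x ⟨_, h2⟩ ⟨h3, _⟩
    exact absurd h3 (not_le.2 h2)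
  have hsplit : Ioo r (1-r) = Ioo r s₁ ∪ Ico s₁ (1-r) :=
    (Ioo_union_Ico_eq_Ioo hrs₁ hs₁1r).symm
  rw [hsplit, lintegral_union measurableSet_Ico hdisj]
  have hIccsub : Icc r s₁ ⊆ Ioo (0:ℝ) 1 := fun x hx => ⟨hr.trans_le hx.1, lt_of_le_of_lt hx.2 hs₁1⟩
  -- piece 1
  have hpt1 : ∀ s ∈ Ioo r s₁,
      ENNReal.ofReal (s⁻¹ * ell s^(-a) * ellell s^(-b)) ≤
        ENNReal.ofReal (2/γ * Df γ b s) := by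
    intro s hs
    have hs0 : 0 < s := hr.trans hs.1
    have hs1 : s < 1 := hs.2.trans hs₁1
    have h := g_le_Df hγ hs0 hs1 (hth s hs0 hs.2.le)
    apply ENNReal.ofReal_le_ofReal
    rw [show (-a : ℝ) = γ - 1 by rw [hγdef]; ring]
    rw [div_mul_eq_mul_div, le_div_iff₀ hγ]
    linarith
  have hint1 : IntegrableOn (fun s : ℝ => 2/γ * Df γ b s) (Ioo r s₁) volume := by
    apply IntegrableOn.mono_set ?_ Ioo_subset_Icc_self
    apply ContinuousOn.integrableOn_Icc
    exact continuousOn_const.mul ((contOn_Df γ b).mono hIccsub)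
  have hnn1 : 0 ≤ᵐ[volume.restrict (Ioo r s₁)] (fun s : ℝ => 2/γ * Df γ b s) := by
    filter_upwards [ae_restrict_mem measurableSet_Ioo] with s hs
    have hs0 : 0 < s := hr.trans hs.1
    have hs1 : s < 1 := hs.2.trans hs₁1
    have := Df_nonneg hγ hs0 hs1 (hth s hs0 hs.2.le)
    positivity
  have hftc : ∫ y in r..s₁, -(Df γ b y) = Hf γ b s₁ - Hf γ b r := by
    apply intervalIntegral.integral_eq_sub_of_hasDerivAt
    · intro x hx
      rw [uIcc_of_le hrs₁.le] at hx
      exact hasDerivAt_Hf γ b (hr.trans_le hx.1) (lt_of_le_of_lt hx.2 hs₁1)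
    · apply ContinuousOn.intervalIntegrable
      rw [uIcc_of_le hrs₁.le]
      exact ((contOn_Df γ b).mono hIccsub).neg
  have hval1 : ∫ s in Ioo r s₁, 2/γ * Df γ b s = 2/γ * (Hf γ b r - Hf γ b s₁) := by
    rw [← MeasureTheory.integral_Ioc_eq_integral_Ioo,
      ← intervalIntegral.integral_of_le hrs₁.le, intervalIntegral.integral_const_mul]
    rw [intervalIntegral.integral_neg] at hftc
    have : ∫ y in r..s₁, Df γ b y = Hf γ b r - Hf γ b s₁ := by linarith
    rw [this]
  have hHfs₁ : 0 ≤ Hf γ b s₁ := Hf_nonneg γ b hs₁pos (by linarith)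
  have hpiece1 : ∫⁻ s in Ioo r s₁, ENNReal.ofReal (s⁻¹ * ell s^(-a) * ellell s^(-b)) ≤
      ENNReal.ofReal (2/γ * Hf γ b r) := by
    calc ∫⁻ s in Ioo r s₁, ENNReal.ofReal (s⁻¹ * ell s^(-a) * ellell s^(-b))
        ≤ ∫⁻ s in Ioo r s₁, ENNReal.ofReal (2/γ * Df γ b s) :=
          setLIntegral_mono' measurableSet_Ioo hpt1
      _ = ENNReal.ofReal (∫ s in Ioo r s₁, 2/γ * Df γ b s) :=
          (MeasureTheory.ofReal_integral_eq_lintegral_ofReal hint1 hnn1).symm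
      _ = ENNReal.ofReal (2/γ * (Hf γ b r - Hf γ b s₁)) := by rw [hval1]
      _ ≤ ENNReal.ofReal (2/γ * Hf γ b r) := by
          apply ENNReal.ofReal_le_ofReal
          have h2γ : (0:ℝ) ≤ 2/γ := by positivity
          nlinarith
  -- piece 2
  have hpiece2 : ∫⁻ s in Ico s₁ (1-r), ENNReal.ofReal (s⁻¹ * ell s^(-a) * ellell s^(-b)) ≤
      ENNReal.ofReal M' := by
    calc ∫⁻ s in Ico s₁ (1-r), ENNReal.ofReal (s⁻¹ * ell s^(-a) * ellell s^(-b))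
        ≤ ∫⁻ _ in Ico s₁ (1-r), ENNReal.ofReal M' := by
          apply setLIntegral_mono' measurableSet_Ico
          intro x hx
          apply ENNReal.ofReal_le_ofReal
          have hx1 : x ∈ Icc s₁ 1 := ⟨hx.1, by linarith [hx.2]⟩
          calc x⁻¹ * ell x^(-a) * ellell x^(-b)
              ≤ |x⁻¹ * ell x^(-a) * ellell x^(-b)| := le_abs_self _
            _ ≤ M := hM x hx1
            _ ≤ M' := le_max_left _ _
      _ = ENNReal.ofReal M' * volume (Ico s₁ (1-r)) := setLIntegral_const _ _
      _ ≤ ENNReal.ofReal M' * 1 := by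
          apply mul_le_mul_right
          rw [Real.volume_Ico]
          exact ENNReal.ofReal_le_one.2 (by linarith)
      _ = ENNReal.ofReal M' := mul_one _
  -- combine
  have hHfr : Hf γ b r = ell r^γ * ellell r^(-b) := Hf_eq hr (by linarith)
  have hHfrpos : M' ≤ ell r^γ * ellell r^(-b) := hr₀M r hr hrr
  have hHfnn : 0 ≤ Hf γ b r := Hf_nonneg γ b hr (by linarith)
  calc (∫⁻ s in Ioo r s₁, ENNReal.ofReal (s⁻¹ * ell s^(-a) * ellell s^(-b))) +
        ∫⁻ s in Ico s₁ (1-r), ENNReal.ofReal (s⁻¹ * ell s^(-a) * ellell s^(-b))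
      ≤ ENNReal.ofReal (2/γ * Hf γ b r) + ENNReal.ofReal M' := add_le_add hpiece1 hpiece2
    _ = ENNReal.ofReal (2/γ * Hf γ b r + M') := by
        rw [← ENNReal.ofReal_add (by positivity) (zero_le_one.trans (le_max_right M 1))]
    _ ≤ ENNReal.ofReal ((2/γ + 1) * (ell r^γ * ellell r^(-b))) := by
        apply ENNReal.ofReal_le_ofReal
        rw [hHfr] at hHfnn ⊢
        nlinarith

lemma key_id (p α β a b x y k : ℝ) (hp : 0 < p) (hx : 0 < x) (hy : 0 < y)
    (hadef : a = α*p) (hbdef : b = β*p) (hk : 0 ≤ k) :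
    (ENNReal.ofReal (k * (x^(1-a) * y^(-b))))^(p⁻¹) =
      ENNReal.ofReal (k^p⁻¹ * (x^(p⁻¹-α) * y^(-β))) := by
  have hnn : 0 ≤ k * (x^(1-a) * y^(-b)) :=
    mul_nonneg hk (mul_nonneg (Real.rpow_nonneg hx.le _) (Real.rpow_nonneg hy.le _))
  rw [ENNReal.ofReal_rpow_of_nonneg hnn (inv_nonneg.2 hp.le)]
  congr 1
  rw [Real.mul_rpow hk (mul_nonneg (Real.rpow_nonneg hx.le _) (Real.rpow_nonneg hy.le _)),
    Real.mul_rpow (Real.rpow_nonneg hx.le _) (Real.rpow_nonneg hy.le _),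
    ← Real.rpow_mul hx.le, ← Real.rpow_mul hy.le,
    show (1-a)*p⁻¹ = p⁻¹ - α by rw [hadef]; field_simp [hp.ne'],
    show (-b)*p⁻¹ = -β by rw [hbdef]; field_simp [hp.ne']]

/-- For `α < 1/q'`: `‖s^{-1/q'} ℓ(s)^{-α} ℓℓ(s)^{-β}‖_{L^{q'}(r,1-r)} ≈ ℓ(r)^{1/q'-α} ℓℓ(r)^{-β}`
near `0`, with constants independent of `r`. -/
theorem stmt12 (q q' : ℝ≥0∞) (hq : 1 ≤ q) (hconj : 1 / q + 1 / q' = 1)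
    (α β : ℝ) (hα : α < (1 / q').toReal) :
    ∃ c C r₀ : ℝ, 0 < c ∧ 0 < C ∧ 0 < r₀ ∧ r₀ ≤ 1 / 4 ∧
      ∀ r ∈ Set.Ioo (0 : ℝ) r₀,
        ENNReal.ofReal (c * (ell r ^ ((1 / q').toReal - α) * ellell r ^ (-β))) ≤
            eLpNorm (fun s : ℝ => s ^ (-(1 / q').toReal) * ell s ^ (-α) * ellell s ^ (-β))
              q' (volume.restrict (Set.Ioo r (1 - r))) ∧
          eLpNorm (fun s : ℝ => s ^ (-(1 / q').toReal) * ell s ^ (-α) * ellell s ^ (-β))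
              q' (volume.restrict (Set.Ioo r (1 - r))) ≤
            ENNReal.ofReal (C * (ell r ^ ((1 / q').toReal - α) * ellell r ^ (-β))) := by
  have hq'0 : q' ≠ 0 := by
    intro h
    rw [h, ENNReal.div_zero one_ne_zero] at hconj
    simp at hconj
  rcases eq_or_ne q' ⊤ with htop | htop
  · subst htop
    have h0 : ((1:ℝ≥0∞)/⊤).toReal = 0 := by simp
    rw [h0] at hα ⊢
    simp only [neg_zero, Real.rpow_zero, one_mul, zero_sub]
    set γ := -α with hγdef
    have hγ : 0 < γ := by rw [hγdef]; linarith
    obtain ⟨s₁, hs₁pos, hs₁le, hth⟩ := threshold γ β hγ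
    have hs₁1 : s₁ < 1 := by linarith
    obtain ⟨M, hM⟩ := (isCompact_Icc (a := s₁) (b := 1)).exists_bound_of_continuousOn
      ((contOn_Hfg γ β).mono (fun x hx => lt_of_lt_of_le hs₁pos hx.1))
    set M' := max M 1 with hM'def
    obtain ⟨r₀, hr₀pos, hr₀sq, hr₀le, hr₀M⟩ := r0_exists γ β M' s₁ hγ hs₁pos hs₁le
    refine ⟨(2:ℝ)^(-|γ|) * (2:ℝ)^(-|(-β)|), 1, r₀, by positivity, one_pos, hr₀pos, hr₀le, ?_⟩
    rintro r ⟨hrpos, hrr⟩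
    have hr4 : r < 1/4 := lt_of_lt_of_le hrr hr₀le
    have hrsq₁ : r < s₁^2 := lt_of_lt_of_le hrr hr₀sq
    have hrs₁ : r < s₁ := by nlinarith
    have hsq0 : 0 < Real.sqrt r := Real.sqrt_pos.2 hrpos
    have hsqs₁ : Real.sqrt r ≤ s₁ := by
      calc Real.sqrt r ≤ Real.sqrt (s₁^2) := Real.sqrt_le_sqrt hrsq₁.le
        _ = s₁ := Real.sqrt_sq hs₁pos.le
    have hrsq : r < Real.sqrt r := by
      nlinarith [Real.sq_sqrt hrpos.le, hsq0, hsqs₁, hs₁le]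
    have hsub : Ioo r (Real.sqrt r) ⊆ Ioo r (1-r) :=
      Ioo_subset_Ioo (le_refl r) (by nlinarith)
    have hanti : AntitoneOn (Hf γ β) (Icc r s₁) := Hf_anti γ β hγ hrpos hs₁1 hth
    have hFr : M' ≤ ell r ^ γ * ellell r ^ (-β) := hr₀M r hrpos hrr
    rw [eLpNorm_exponent_top]
    constructor
    · -- lower bound
      by_contra hcon
      push_neg at hcon
      obtain ⟨hb1, hb2, hb3, hb4⟩ := sqrt_band hrpos (by linarith)
      have hpt : ∀ x ∈ Ioo r (Real.sqrt r),
          ENNReal.ofReal ((2:ℝ)^(-|γ|) * (2:ℝ)^(-|(-β)|) * (ell r ^ γ * ellell r ^ (-β))) ≤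
            (‖ell x ^ γ * ellell x ^ (-β)‖₊ : ℝ≥0∞) := by
        intro x hx
        have hx0 : 0 < x := hrpos.trans hx.1
        have hx1 : x ≤ 1 := by nlinarith [hx.2, hsqs₁, hs₁le]
        have hband1 : (2:ℝ)^(-|γ|) * ell r ^ γ ≤ ell (Real.sqrt r) ^ γ :=
          band (ell_pos _) hb1 hb2
        have hband2 : (2:ℝ)^(-|(-β)|) * ellell r ^ (-β) ≤ ellell (Real.sqrt r) ^ (-β) :=
          band (ellell_pos _) hb3 hb4
        have hmono : Hf γ β (Real.sqrt r) ≤ Hf γ β x :=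
          hanti ⟨hx.1.le, hx.2.le.trans hsqs₁⟩ ⟨hrsq.le, hsqs₁⟩ hx.2.le
        rw [Hf_eq hx0 hx1, Hf_eq hsq0 (by linarith [hsqs₁, hs₁le])] at hmono
        have hreal : (2:ℝ)^(-|γ|) * (2:ℝ)^(-|(-β)|) * (ell r ^ γ * ellell r ^ (-β)) ≤
            ell x ^ γ * ellell x ^ (-β) := by
          calc (2:ℝ)^(-|γ|) * (2:ℝ)^(-|(-β)|) * (ell r ^ γ * ellell r ^ (-β))
              = ((2:ℝ)^(-|γ|) * ell r ^ γ) * ((2:ℝ)^(-|(-β)|) * ellell r ^ (-β)) := by ring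
            _ ≤ ell (Real.sqrt r) ^ γ * (2^(-|(-β)|) * ellell r ^ (-β)) := by
                apply mul_le_mul_of_nonneg_right hband1
                have := Real.rpow_pos_of_pos (ellell_pos r) (-β)
                positivity
            _ ≤ ell (Real.sqrt r) ^ γ * ellell (Real.sqrt r) ^ (-β) := by
                apply mul_le_mul_of_nonneg_left hband2
                  (Real.rpow_nonneg (ell_pos _).le _)
            _ ≤ ell x ^ γ * ellell x ^ (-β) := hmono
        calc ENNReal.ofReal ((2:ℝ)^(-|γ|) * (2:ℝ)^(-|(-β)|) * (ell r ^ γ * ellell r ^ (-β)))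
            ≤ ENNReal.ofReal (ell x ^ γ * ellell x ^ (-β)) := ENNReal.ofReal_le_ofReal hreal
          _ = (‖ell x ^ γ * ellell x ^ (-β)‖₊ : ℝ≥0∞) := by
              rw [← ENNReal.ofReal_coe_nnreal, coe_nnnorm, Real.norm_eq_abs, abs_of_nonneg
                (mul_nonneg (Real.rpow_nonneg (ell_pos _).le _)
                  (Real.rpow_nonneg (ellell_pos _).le _))]
      have hae := ae_le_eLpNormEssSup
        (f := fun s : ℝ => ell s ^ γ * ellell s ^ (-β)) (μ := volume.restrict (Ioo r (1-r)))
      have hnull : ∀ᵐ x ∂(volume.restrict (Ioo r (1-r))), x ∉ Ioo r (Real.sqrt r) := by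
        filter_upwards [hae] with x hx hxS
        exact absurd ((hpt x hxS).trans hx) (not_le.2 hcon)
      rw [ae_iff] at hnull
      simp only [not_not] at hnull
      have hmeas : (volume.restrict (Ioo r (1-r))) (Ioo r (Real.sqrt r)) = 0 := by
        convert hnull using 2
        rfl
      rw [Measure.restrict_apply measurableSet_Ioo,
        Set.inter_eq_self_of_subset_left hsub, Real.volume_Ioo] at hmeas
      exact absurd hmeas (ENNReal.ofReal_pos.2 (by linarith)).ne'
    · -- upper bound
      rw [one_mul]
      apply eLpNormEssSup_le_of_ae_bound (C := ell r ^ γ * ellell r ^ (-β))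
      filter_upwards [ae_restrict_mem measurableSet_Ioo] with x hx
      have hx0 : 0 < x := hrpos.trans hx.1
      have hx1 : x ≤ 1 := by linarith [hx.2]
      have hxnn : 0 ≤ ell x ^ γ * ellell x ^ (-β) :=
        mul_nonneg (Real.rpow_nonneg (ell_pos _).le _) (Real.rpow_nonneg (ellell_pos _).le _)
      rw [Real.norm_eq_abs, abs_of_nonneg hxnn]
      rcases le_or_gt x s₁ with hc | hc
      · have hmono : Hf γ β x ≤ Hf γ β r :=
          hanti ⟨le_refl r, hrs₁.le⟩ ⟨hx.1.le, hc⟩ hx.1.le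
        rwa [Hf_eq hx0 hx1, Hf_eq hrpos (by linarith)] at hmono
      · calc ell x ^ γ * ellell x ^ (-β) ≤ ‖ell x ^ γ * ellell x ^ (-β)‖ := le_abs_self _
          _ ≤ M := hM x ⟨hc.le, hx1⟩
          _ ≤ M' := le_max_left _ _
          _ ≤ ell r ^ γ * ellell r ^ (-β) := hFr
  · -- finite case
    set p := q'.toReal with hpdef
    have hppos : 0 < p := ENNReal.toReal_pos hq'0 htop
    have hp' : (1/q').toReal = p⁻¹ := by rw [one_div, ENNReal.toReal_inv]
    rw [hp'] at hα ⊢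
    set a := α * p with hadef
    set b := β * p with hbdef
    have ha : a < 1 := by
      rw [hadef]
      calc α * p < p⁻¹ * p := mul_lt_mul_of_pos_right hα hppos
        _ = 1 := inv_mul_cancel₀ hppos.ne'
    obtain ⟨c₀, hc₀, hlow⟩ := core_lower a b
    obtain ⟨C₀, r₀, hC₀, hr₀pos, hr₀le, hupp⟩ := core_upper a b ha
    refine ⟨c₀^p⁻¹, C₀^p⁻¹, r₀, Real.rpow_pos_of_pos hc₀ _, Real.rpow_pos_of_pos hC₀ _,
      hr₀pos, hr₀le, ?_⟩
    intro r hr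
    have hrpos : 0 < r := hr.1
    have hr4 : r < 1/4 := lt_of_lt_of_le hr.2 hr₀le
    -- eLpNorm as a lintegral
    have hnorm : eLpNorm (fun s : ℝ => s ^ (-p⁻¹) * ell s ^ (-α) * ellell s ^ (-β))
        q' (volume.restrict (Ioo r (1-r))) =
        (∫⁻ s in Ioo r (1-r), ENNReal.ofReal (s⁻¹ * ell s^(-a) * ellell s^(-b))) ^ p⁻¹ := by
      rw [eLpNorm_eq_lintegral_rpow_enorm_toReal hq'0 htop, one_div]
      congr 1
      apply setLIntegral_congr_fun measurableSet_Ioo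
      intro s hs
      beta_reduce
      have hs0 : 0 < s := hrpos.trans hs.1
      have hf1 : (0:ℝ) < s ^ (-p⁻¹) := Real.rpow_pos_of_pos hs0 _
      have hf2 : (0:ℝ) < ell s ^ (-α) := Real.rpow_pos_of_pos (ell_pos s) _
      have hf3 : (0:ℝ) < ellell s ^ (-β) := Real.rpow_pos_of_pos (ellell_pos s) _
      rw [← ofReal_norm_eq_enorm, Real.norm_eq_abs,
        abs_of_pos (mul_pos (mul_pos hf1 hf2) hf3),
        ENNReal.ofReal_rpow_of_nonneg (mul_pos (mul_pos hf1 hf2) hf3).le hppos.le]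
      congr 1
      rw [Real.mul_rpow (mul_pos hf1 hf2).le hf3.le, Real.mul_rpow hf1.le hf2.le]
      rw [← Real.rpow_mul hs0.le, ← Real.rpow_mul (ell_pos s).le,
        ← Real.rpow_mul (ellell_pos s).le]
      rw [show -p⁻¹ * p = -1 by field_simp, show -α * p = -a by rw [hadef]; ring,
        show -β * p = -b by rw [hbdef]; ring, Real.rpow_neg_one]
    rw [hnorm]
    constructor
    · rw [← key_id p α β a b (ell r) (ellell r) c₀ hppos (ell_pos r) (ellell_pos r)
        hadef hbdef hc₀.le]
      exact ENNReal.rpow_le_rpow (hlow r hrpos hr4) (inv_nonneg.2 hppos.le)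
    · rw [← key_id p α β a b (ell r) (ellell r) C₀ hppos (ell_pos r) (ellell_pos r)
        hadef hbdef hC₀.le]
      exact ENNReal.rpow_le_rpow (hupp r hrpos hr.2) (inv_nonneg.2 hppos.le)
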